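/- If the classical propositional formula α is a tautology, then Prob(α) = 1. -/

import Mathlib

open scoped InnerProductSpace

noncomputable section

/-- Classical propositional formulas, built from propositional symbols `B_j` (`j : ℕ`)
and `⊤` using `¬` and `→`. -/
inductive PropForm : Type
  | verum : PropForm
  | var : ℕ → PropForm
  | neg : PropForm → PropForm
  | imp : PropForm → PropForm → PropForm

namespace PropForm

/-- The (finite) set of propositional symbols occurring in a formula. -/
def symbols : PropForm → Finset ℕ
  | verum => ∅
  | var n => {n}
  | neg a => a.symbols
  | imp a b => a.symbols ∪ b.symbols

/-- Truth-table evaluation of a formula under a (total) assignment of truth values. -/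
def eval (w : ℕ → Bool) : PropForm → Bool
  | verum => true
  | var n => w n
  | neg a => !(a.eval w)
  | imp a b => !(a.eval w) || b.eval w

end PropForm

/-- A valuation `v` on a set `A` of propositional symbols (with `A ⊇ B_α`) satisfies `α`. -/
def Sat (A : Finset ℕ) (v : {n // n ∈ A} → Bool) (α : PropForm) : Prop :=
  PropForm.eval (fun n => if h : n ∈ A then v ⟨n, h⟩ else false) α = true

instance (A : Finset ℕ) (α : PropForm) : DecidablePred (fun v => Sat A v α) := fun _ => by
  unfold Sat; infer_instance

variable {ι H : Type*} [NormedAddCommGroup H] [InnerProductSpace ℂ H] [CompleteSpace H]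

/-- `Hs u S` is the topological closure of the linear span of `{u i : i ∈ S}`. -/
def Hs (u : HilbertBasis ι ℂ H) (S : Set ι) : Submodule ℂ H :=
  (Submodule.span ℂ ((fun i => u i) '' S)).topologicalClosure

instance (u : HilbertBasis ι ℂ H) (S : Set ι) : Submodule.HasOrthogonalProjection (Hs u S) :=
  haveI : CompleteSpace (Hs u S) :=
    (Submodule.isClosed_topologicalClosure _).isComplete.completeSpace_coe
  Submodule.HasOrthogonalProjection.ofCompleteSpace _

/-- The orthogonal projection of `H` onto `Hs u S`, as an operator on `H`. -/
def P (u : HilbertBasis ι ℂ H) (S : Set ι) : H →L[ℂ] H :=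
  (Hs u S).subtypeL.comp (Submodule.orthogonalProjectionOnto (Hs u S))

/-- `Pj u lam j S` is the orthogonal projection onto the closure of the span of
`{u i : lam j i ∈ S}`. -/
def Pj (u : HilbertBasis ι ℂ H) (lam : ℕ → ι → ℝ) (j : ℕ) (S : Set ℝ) : H →L[ℂ] H :=
  P u {i | lam j i ∈ S}

/-- `Prob u lam up ψ α` is the probability assigned to the classical formula `α`:
the sum, over the valuations `v` on `B_α` satisfying `α`, of
`Re ⟪ψ, P_{j_k}(D_{j_k}^v)(⋯ (P_{j_1}(D_{j_1}^v) ψ) ⋯)⟫` where `B_α = {j_1 < … < j_k}`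
and `D_j^v` is `up j` if `v (B_j) = 1` and its complement otherwise. -/
def Prob (u : HilbertBasis ι ℂ H) (lam : ℕ → ι → ℝ) (up : ℕ → Set ℝ) (ψ : H)
    (α : PropForm) : ℝ :=
  ∑ v ∈ Finset.univ.filter (fun v : {n // n ∈ α.symbols} → Bool => Sat α.symbols v α),
    (⟪ψ, (α.symbols.sort (· ≤ ·)).foldl
        (fun x j => if h : j ∈ α.symbols then
            Pj u lam j (if v ⟨j, h⟩ then up j else (up j)ᶜ) x
          else x) ψ⟫_ℂ).re

set_option linter.unusedSectionVars false in
lemma orth_closure (K : Submodule ℂ H) : K.topologicalClosureᗮ = Kᗮ := by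
  rw [← Submodule.orthogonal_orthogonal_eq_closure]
  exact le_antisymm (Submodule.orthogonal_le K.le_orthogonal_orthogonal)
    Kᗮ.le_orthogonal_orthogonal

lemma Hs_compl (u : HilbertBasis ι ℂ H) (S : Set ι) : Hs u Sᶜ = (Hs u S)ᗮ := by
  apply le_antisymm
  · rw [Hs, Hs, orth_closure]
    have hle : Submodule.span ℂ ((fun i => u i) '' Sᶜ) ≤
        (Submodule.span ℂ ((fun i => u i) '' S))ᗮ := by
      refine (Submodule.isOrtho_span.mpr ?_).le
      rintro _ ⟨i, hi, rfl⟩ _ ⟨i', hi', rfl⟩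
      exact u.orthonormal.2 (fun h => hi (h ▸ hi'))
    exact Submodule.topologicalClosure_minimal _ hle (Submodule.isClosed_orthogonal _)
  · intro x hx
    have hrepr : ∀ i ∈ S, u.repr x i = 0 := by
      intro i hi
      rw [u.repr_apply_apply]
      rw [Submodule.mem_orthogonal] at hx
      exact hx (u i)
        (Submodule.le_topologicalClosure _ (Submodule.subset_span ⟨i, hi, rfl⟩))
    refine IsClosed.mem_of_tendsto (Submodule.isClosed_topologicalClosure _)
      (u.hasSum_repr x) (Filter.Eventually.of_forall fun s => ?_)
    refine Submodule.sum_mem _ fun i _ => ?_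
    by_cases hi : i ∈ S
    · simp [hrepr i hi]
    · exact Submodule.smul_mem _ _
        (Submodule.le_topologicalClosure _ (Submodule.subset_span ⟨i, hi, rfl⟩))

lemma proj_congr {K L : Submodule ℂ H} [Submodule.HasOrthogonalProjection K]
    [Submodule.HasOrthogonalProjection L]
    (h : K = L) (x : H) : (Submodule.orthogonalProjectionOnto K x : H) =
      Submodule.orthogonalProjectionOnto L x := by
  subst h; rfl

lemma P_add_P_compl (u : HilbertBasis ι ℂ H) (S : Set ι) (x : H) :
    P u S x + P u Sᶜ x = x := by
  have h : (Submodule.orthogonalProjectionOnto (Hs u S) x : H) +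
      (Submodule.orthogonalProjectionOnto (Hs u S)ᗮ x : H) = x := by
    simpa only [Submodule.starProjection_apply] using
      (Hs u S).starProjection_add_starProjection_orthogonal x
  have h2 : P u Sᶜ x = (Submodule.orthogonalProjectionOnto (Hs u S)ᗮ x : H) :=
    proj_congr (Hs_compl u S) x
  calc P u S x + P u Sᶜ x
      = (Submodule.orthogonalProjectionOnto (Hs u S) x : H) +
          (Submodule.orthogonalProjectionOnto (Hs u S)ᗮ x : H) := by
        rw [h2]; rfl
    _ = x := h

def step (u : HilbertBasis ι ℂ H) (lam : ℕ → ι → ℝ) (up : ℕ → Set ℝ) (A : Finset ℕ)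
    (v : {n // n ∈ A} → Bool) (x : H) (j : ℕ) : H :=
  if h : j ∈ A then Pj u lam j (if v ⟨j, h⟩ then up j else (up j)ᶜ) x else x

lemma foldl_add (u : HilbertBasis ι ℂ H) (lam : ℕ → ι → ℝ) (up : ℕ → Set ℝ) (A : Finset ℕ)
    (v : {n // n ∈ A} → Bool) (l : List ℕ) :
    ∀ x y : H, l.foldl (step u lam up A v) (x + y)
      = l.foldl (step u lam up A v) x + l.foldl (step u lam up A v) y := by
  induction l with
  | nil => intro x y; rfl
  | cons a l ih =>
    intro x y
    simp only [List.foldl_cons]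
    rw [show step u lam up A v (x + y) a = step u lam up A v x a + step u lam up A v y a by
      unfold step; split <;> simp]
    exact ih _ _

lemma step_congr (u : HilbertBasis ι ℂ H) (lam : ℕ → ι → ℝ) (up : ℕ → Set ℝ) (A : Finset ℕ)
    (v w : {n // n ∈ A} → Bool) (x : H) (a : ℕ)
    (hvw : ∀ (hj : a ∈ A), v ⟨a, hj⟩ = w ⟨a, hj⟩) :
    step u lam up A v x a = step u lam up A w x a := by
  unfold step
  by_cases h : a ∈ A
  · rw [dif_pos h, dif_pos h, hvw h]
  · rw [dif_neg h, dif_neg h]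

lemma foldl_congr (u : HilbertBasis ι ℂ H) (lam : ℕ → ι → ℝ) (up : ℕ → Set ℝ) (A : Finset ℕ)
    (l : List ℕ) (v w : {n // n ∈ A} → Bool)
    (hvw : ∀ j (hj : j ∈ A), j ∈ l → v ⟨j, hj⟩ = w ⟨j, hj⟩) :
    ∀ x : H, l.foldl (step u lam up A v) x = l.foldl (step u lam up A w) x := fun x =>
  List.foldl_ext _ _ x (fun x' b hb => step_congr u lam up A v w x' b (fun hj => hvw b hj hb))

lemma key_sum (u : HilbertBasis ι ℂ H) (lam : ℕ → ι → ℝ) (up : ℕ → Set ℝ) (A : Finset ℕ)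
    (ψ : H) (l : List ℕ) (hnd : l.Nodup) (hmem : ∀ j ∈ l, j ∈ A) :
    (2 ^ l.length : ℂ) • ∑ v : {n // n ∈ A} → Bool, l.foldl (step u lam up A v) ψ
      = (2 ^ A.card : ℂ) • ψ := by
  induction l with
  | nil =>
    simp only [List.foldl_nil, Finset.sum_const, Finset.card_univ, List.length_nil, pow_zero,
      one_smul]
    rw [Fintype.card_fun, Fintype.card_coe, Fintype.card_bool]
    rw [← Nat.cast_smul_eq_nsmul ℂ]
    norm_num
  | cons a l ih =>
    have ha : a ∈ A := hmem a List.mem_cons_self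
    have hal : a ∉ l := (List.nodup_cons.mp hnd).1
    set upd : ({n // n ∈ A} → Bool) → ({n // n ∈ A} → Bool) :=
      fun v => Function.update v ⟨a, ha⟩ (!(v ⟨a, ha⟩)) with hupd
    have hinv : Function.Involutive upd := by
      intro v
      funext j
      by_cases hj : j = ⟨a, ha⟩
      · subst hj; simp [hupd, Function.update_self]
      · simp [hupd, Function.update_of_ne hj]
    have hreindex : ∑ v : {n // n ∈ A} → Bool, l.foldl (step u lam up A v) (step u lam up A v ψ a)
        = ∑ v : {n // n ∈ A} → Bool, l.foldl (step u lam up A v) (step u lam up A (upd v) ψ a) := by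
      rw [← Function.Bijective.sum_comp hinv.bijective
        (fun v => l.foldl (step u lam up A v) (step u lam up A v ψ a))]
      refine Finset.sum_congr rfl fun v _ => ?_
      refine foldl_congr u lam up A l (upd v) v (fun j hj hjl => ?_) _
      have hne : (⟨j, hj⟩ : {n // n ∈ A}) ≠ ⟨a, ha⟩ := by
        simp only [ne_eq, Subtype.mk.injEq]
        exact fun h => hal (h ▸ hjl)
      simp [hupd, Function.update_of_ne hne]
    have hpair : ∀ v : {n // n ∈ A} → Bool,
        step u lam up A v ψ a + step u lam up A (upd v) ψ a = ψ := by
      intro v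
      unfold step
      rw [dif_pos ha, dif_pos ha]
      have hupda : upd v ⟨a, ha⟩ = !(v ⟨a, ha⟩) := Function.update_self _ _ _
      rw [hupda]
      have hcompl : {i | lam a i ∈ (up a)ᶜ} = {i | lam a i ∈ up a}ᶜ := rfl
      cases hb : v ⟨a, ha⟩ with
      | true =>
        rw [if_pos rfl, if_neg (by simp), Pj, Pj, hcompl]
        exact P_add_P_compl u _ ψ
      | false =>
        rw [if_neg (by simp), if_pos (by simp), add_comm, Pj, Pj, hcompl]
        exact P_add_P_compl u _ ψ
    have htwo : (2 : ℂ) • ∑ v : {n // n ∈ A} → Bool, l.foldl (step u lam up A v)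
          (step u lam up A v ψ a)
        = ∑ v : {n // n ∈ A} → Bool, l.foldl (step u lam up A v) ψ := by
      rw [two_smul]
      nth_rewrite 2 [hreindex]
      rw [← Finset.sum_add_distrib]
      refine Finset.sum_congr rfl fun v _ => ?_
      exact (foldl_add u lam up A v l _ _).symm.trans
        (congrArg (fun y => List.foldl (step u lam up A v) y l) (hpair v))
    simp only [List.foldl_cons, List.length_cons]
    rw [pow_succ, mul_smul, htwo]
    exact ih (List.nodup_cons.mp hnd).2 (fun j hj => hmem j (List.mem_cons_of_mem a hj))

/-- If `α` is a tautology, then `Prob(α) = 1`. -/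
theorem stmt6 (u : HilbertBasis ι ℂ H) (ψ : H) (hψ : ‖ψ‖ = 1)
    (O : ℕ → H →L[ℂ] H) (lam : ℕ → ι → ℝ)
    (heig : ∀ j i, O j (u i) = (lam j i : ℂ) • u i) (up : ℕ → Set ℝ) (α : PropForm)
    (htaut : ∀ v : {n // n ∈ α.symbols} → Bool, Sat α.symbols v α) :
    Prob u lam up ψ α = 1 := by
  unfold Prob
  rw [Finset.filter_true_of_mem (fun v _ => htaut v)]
  show ∑ v : {n // n ∈ α.symbols} → Bool,
      (⟪ψ, (α.symbols.sort (· ≤ ·)).foldl (step u lam up α.symbols v) ψ⟫_ℂ).re = 1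
  rw [← Complex.re_sum, ← inner_sum]
  have h := key_sum u lam up α.symbols ψ (α.symbols.sort (· ≤ ·))
    (α.symbols.sort_nodup _) (fun j hj => (α.symbols.mem_sort _).mp hj)
  rw [Finset.length_sort] at h
  have hmain : ∑ v : {n // n ∈ α.symbols} → Bool,
      (α.symbols.sort (· ≤ ·)).foldl (step u lam up α.symbols v) ψ = ψ :=
    smul_right_injective H (pow_ne_zero _ (two_ne_zero (α := ℂ))) h
  rw [hmain, inner_self_eq_norm_sq_to_K, hψ]
  norm_num

end
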